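/- Let n ∈ ℕ, 0 < q < 1, and let v₁, …, vₙ ∈ ℂ satisfy q·e^{4π|Im(v_j)|} < 1 for each j. Then the n×n complex matrix whose (j,k) entry is D(v_j − conj(v_k)), where D(v) = ∑_{ℓ∈ℤ} (q^ℓ/(1+q^{2ℓ})) e^{2πiℓv}, is positive semidefinite. (D(v) equals (K/π)·dn(2Kv), where dn is the Jacobi elliptic function and K = (π/2)θ₃(0,q)².) -/

import Mathlib

open Complex ComplexOrder

/-- The Fourier series `D(v) = ∑_{ℓ ∈ ℤ} (q^ℓ / (1 + q^{2ℓ})) e^{2πiℓv}`, which equals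
`(K/π)·dn(2Kv)` where `dn` is the Jacobi elliptic function and `K = (π/2)θ₃(0,q)²`. -/
noncomputable def dnFourier (q : ℝ) (v : ℂ) : ℂ :=
  ∑' l : ℤ, ((q : ℂ) ^ l / (1 + (q : ℂ) ^ (2 * l))) * Complex.exp (2 * Real.pi * Complex.I * l * v)

/-- For `n ∈ ℕ`, `0 < q < 1` and `v₁, …, vₙ ∈ ℂ` with `q·e^{4π|Im v_j|} < 1`, the matrix
`(D(v_j - conj v_k))_{j,k}` is positive semidefinite. -/
theorem dn_matrix_posSemidef (n : ℕ) (q : ℝ) (hq0 : 0 < q) (hq1 : q < 1)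
    (v : Fin n → ℂ) (hv : ∀ j, q * Real.exp (4 * Real.pi * |(v j).im|) < 1) :
    ∀ c : Fin n → ℂ,
      0 ≤ ∑ j : Fin n, ∑ k : Fin n,
        dnFourier q (v j - (starRingEnd ℂ) (v k)) * c j * (starRingEnd ℂ) (c k) := by
  intro c
  set π := Real.pi with hπ
  -- the real, positive Fourier coefficients
  set A : ℤ → ℝ := fun l => q ^ l / (1 + q ^ (2 * l)) with hA
  have hApos : ∀ l, 0 < A l := fun l =>
    div_pos (zpow_pos hq0 l) (by linarith [zpow_pos hq0 (2 * l)])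
  have hq0' : (0:ℝ) < q ^ (2 : ℤ) := zpow_pos hq0 2
  have hAle : ∀ l : ℤ, A l ≤ q ^ l.natAbs := by
    intro l
    rcases le_or_gt 0 l with hl | hl
    · have h1 : A l ≤ q ^ l :=
        div_le_self (le_of_lt (zpow_pos hq0 l)) (by linarith [zpow_pos hq0 (2 * l)])
      calc A l ≤ q ^ l := h1
        _ = q ^ l.natAbs := by
            rw [← zpow_natCast, Int.natAbs_of_nonneg hl]
    · have h1 : A l ≤ q ^ l / q ^ (2 * l) := by
        apply div_le_div_of_nonneg_left (le_of_lt (zpow_pos hq0 l)) (zpow_pos hq0 (2 * l))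
        linarith
      calc A l ≤ q ^ l / q ^ (2 * l) := h1
        _ = q ^ (l - 2 * l) := by rw [← zpow_sub₀ (ne_of_gt hq0)]
        _ = q ^ (-l) := by ring_nf
        _ = q ^ l.natAbs := by
            rw [← zpow_natCast]
            congr 1
            omega
  -- the generic exponential term
  set e : ℤ → ℂ → ℂ := fun l w => Complex.exp (2 * (π:ℂ) * Complex.I * l * w) with he
  have hnorm_e : ∀ (l : ℤ) (w : ℂ), ‖e l w‖ ≤ Real.exp (2 * π * l.natAbs * |w.im|) := by
    intro l w
    have hre : (2 * (π:ℂ) * Complex.I * l * w).re = -(2 * π * l * w.im) := by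
      simp [Complex.mul_re, Complex.mul_im]
    rw [he]
    simp only [Complex.norm_exp, hre]
    apply Real.exp_le_exp.mpr
    calc -(2 * π * l * w.im) ≤ |2 * π * l * w.im| := neg_le_abs _
      _ = 2 * π * |((l:ℝ))| * |w.im| := by
          rw [abs_mul, abs_mul, abs_mul, _root_.abs_two, _root_.abs_of_pos Real.pi_pos]
      _ = 2 * π * l.natAbs * |w.im| := by
          rw [Nat.cast_natAbs, Int.cast_abs]
  -- the summand
  set F : Fin n → Fin n → ℤ → ℂ := fun j k l =>
    ((A l : ℂ)) * e l (v j - (starRingEnd ℂ) (v k)) * c j * (starRingEnd ℂ) (c k) with hF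
  -- summability of each entry series
  have hSumF : ∀ j k, Summable (F j k) := by
    intro j k
    set r : ℝ := q * Real.exp (2 * π * (|(v j).im| + |(v k).im|)) with hr
    have hr0 : 0 ≤ r := le_of_lt (mul_pos hq0 (Real.exp_pos _))
    have hr1 : r < 1 := by
      have hsq : r * r = (q * Real.exp (4 * π * |(v j).im|)) *
          (q * Real.exp (4 * π * |(v k).im|)) := by
        rw [hr, mul_mul_mul_comm, ← Real.exp_add, mul_mul_mul_comm, ← Real.exp_add]
        congr 2
        ring
      nlinarith [hv j, hv k, mul_pos hq0 (Real.exp_pos (4 * π * |(v j).im|)),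
        mul_pos hq0 (Real.exp_pos (4 * π * |(v k).im|))]
    have hgeo : Summable (fun l : ℤ => (‖c j‖ * ‖c k‖) * r ^ l.natAbs) := by
      apply Summable.mul_left
      apply Summable.of_nat_of_neg
      · simpa using summable_geometric_of_lt_one hr0 hr1
      · simpa using summable_geometric_of_lt_one hr0 hr1
    apply Summable.of_norm_bounded hgeo
    intro l
    have him : |(v j - (starRingEnd ℂ) (v k)).im| ≤ |(v j).im| + |(v k).im| := by
      simp only [Complex.sub_im, Complex.conj_im]
      calc |(v j).im - -(v k).im| ≤ |(v j).im| + |-(v k).im| := abs_sub _ _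
        _ = |(v j).im| + |(v k).im| := by rw [abs_neg]
    have hb : ‖((A l : ℂ)) * e l (v j - (starRingEnd ℂ) (v k))‖ ≤ r ^ l.natAbs := by
      rw [norm_mul, Complex.norm_real, Real.norm_eq_abs, abs_of_pos (hApos l)]
      calc A l * ‖e l (v j - (starRingEnd ℂ) (v k))‖
          ≤ q ^ l.natAbs * Real.exp (2 * π * l.natAbs * (|(v j).im| + |(v k).im|)) := by
            apply mul_le_mul (hAle l)
            · refine (hnorm_e l _).trans (Real.exp_le_exp.mpr ?_)
              have h1 : (0:ℝ) ≤ 2 * π * l.natAbs := by positivity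
              exact mul_le_mul_of_nonneg_left him h1
            · exact norm_nonneg _
            · positivity
        _ = r ^ l.natAbs := by
            rw [hr, mul_pow, ← Real.exp_nat_mul]
            congr 2
            ring
    calc ‖F j k l‖ = ‖((A l : ℂ)) * e l (v j - (starRingEnd ℂ) (v k))‖ * ‖c j‖ * ‖c k‖ := by
          rw [hF]; simp [norm_mul]
      _ ≤ r ^ l.natAbs * ‖c j‖ * ‖c k‖ := by
          apply mul_le_mul_of_nonneg_right (mul_le_mul_of_nonneg_right hb (norm_nonneg _))
            (norm_nonneg _)
      _ = ‖c j‖ * ‖c k‖ * r ^ l.natAbs := by ring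
  -- each entry times c's is a tsum of F
  have hentry : ∀ j k, dnFourier q (v j - (starRingEnd ℂ) (v k)) * c j * (starRingEnd ℂ) (c k)
      = ∑' l : ℤ, F j k l := by
    intro j k
    rw [dnFourier, ← tsum_mul_right, ← tsum_mul_right]
    apply tsum_congr
    intro l
    rw [hF]
    congr 2
    rw [hA]
    push_cast
    ring
  -- the partial exponential sums
  set s : ℤ → ℂ := fun l => ∑ j : Fin n, e l (v j) * c j with hs
  -- key algebraic identity per frequency
  have key : ∀ l : ℤ, (∑ j : Fin n, ∑ k : Fin n, F j k l)
      = ((A l * Complex.normSq (s l) : ℝ) : ℂ) := by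
    intro l
    have hterm : ∀ j k : Fin n, F j k l
        = (A l : ℂ) * ((e l (v j) * c j) * (starRingEnd ℂ) (e l (v k) * c k)) := by
      intro j k
      simp only [hF]
      have hsplit : e l (v j - (starRingEnd ℂ) (v k))
          = e l (v j) * (starRingEnd ℂ) (e l (v k)) := by
        rw [he]
        simp only
        rw [← Complex.exp_conj, ← Complex.exp_add]
        congr 1
        simp only [map_mul, Complex.conj_I, map_ofNat, Complex.conj_ofReal, map_intCast]
        try ring
      rw [hsplit, map_mul]
      ring
    calc (∑ j : Fin n, ∑ k : Fin n, F j k l)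
        = ∑ j : Fin n, ∑ k : Fin n,
            (A l : ℂ) * ((e l (v j) * c j) * (starRingEnd ℂ) (e l (v k) * c k)) := by
          exact Finset.sum_congr rfl fun j _ => Finset.sum_congr rfl fun k _ => hterm j k
      _ = (A l : ℂ) * (s l * (starRingEnd ℂ) (s l)) := by
          have hss : s l * (starRingEnd ℂ) (s l) = ∑ j : Fin n, ∑ k : Fin n,
              (e l (v j) * c j) * (starRingEnd ℂ) (e l (v k) * c k) := by
            rw [hs]
            rw [map_sum]
            exact Finset.sum_mul_sum _ _ _ _
          rw [hss, Finset.mul_sum]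
          refine Finset.sum_congr rfl fun j _ => ?_
          rw [Finset.mul_sum]
      _ = ((A l * Complex.normSq (s l) : ℝ) : ℂ) := by
          rw [Complex.mul_conj]
          push_cast
          ring
  -- put everything together
  have hswap : (∑ j : Fin n, ∑ k : Fin n, ∑' l : ℤ, F j k l)
      = ∑' l : ℤ, ∑ j : Fin n, ∑ k : Fin n, F j k l := by
    have h1 : ∀ j : Fin n, (∑ k : Fin n, ∑' l : ℤ, F j k l) = ∑' l : ℤ, ∑ k : Fin n, F j k l :=
      fun j => (Summable.tsum_finsetSum fun k _ => hSumF j k).symm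
    calc (∑ j : Fin n, ∑ k : Fin n, ∑' l : ℤ, F j k l)
        = ∑ j : Fin n, ∑' l : ℤ, ∑ k : Fin n, F j k l :=
          Finset.sum_congr rfl fun j _ => h1 j
      _ = ∑' l : ℤ, ∑ j : Fin n, ∑ k : Fin n, F j k l :=
          (Summable.tsum_finsetSum fun j _ => summable_sum fun k _ => hSumF j k).symm
  calc (0:ℂ) ≤ ((∑' l : ℤ, A l * Complex.normSq (s l) : ℝ) : ℂ) := by
        rw [Complex.zero_le_real]
        exact tsum_nonneg fun l => mul_nonneg (le_of_lt (hApos l)) (Complex.normSq_nonneg _)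
    _ = ∑' l : ℤ, ((A l * Complex.normSq (s l) : ℝ) : ℂ) := Complex.ofReal_tsum _
    _ = ∑' l : ℤ, ∑ j : Fin n, ∑ k : Fin n, F j k l := by
        exact tsum_congr fun l => (key l).symm
    _ = ∑ j : Fin n, ∑ k : Fin n, ∑' l : ℤ, F j k l := hswap.symm
    _ = ∑ j : Fin n, ∑ k : Fin n,
          dnFourier q (v j - (starRingEnd ℂ) (v k)) * c j * (starRingEnd ℂ) (c k) := by
        exact Finset.sum_congr rfl fun j _ => Finset.sum_congr rfl fun k _ => (hentry j k).symm
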